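/- For 1 ≤ p < ∞, the space L^p_w(ν, X, Y), equipped with the norm ‖f‖ = sup_{‖y'‖≤1}(∫_Ω ‖f‖ᵖ d|y'∘ν|)^{1/p}, is a Banach space (complete normed space). -/

import Mathlib

open MeasureTheory ENNReal

variable {Ω X Y : Type*}

/-- The total variation measure of the scalar measure `y' ∘ ν`. -/
noncomputable def scalarVar [MeasurableSpace Ω] [NormedAddCommGroup Y] [NormedSpace ℝ Y]
    (ν : VectorMeasure Ω Y) (y' : Y →L[ℝ] ℝ) : Measure Ω :=
  SignedMeasure.totalVariation (VectorMeasure.mapRange ν (y' : Y →ₗ[ℝ] ℝ).toAddMonoidHom y'.continuous)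

/-- The `L^p_w(ν, X, Y)` norm. -/
noncomputable def lpwNorm [MeasurableSpace Ω] [NormedAddCommGroup X] [NormedAddCommGroup Y]
    [NormedSpace ℝ Y] (ν : VectorMeasure Ω Y) (p : ℝ) (f : Ω → X) : ℝ≥0∞ :=
  ⨆ y' ∈ {y' : Y →L[ℝ] ℝ | ‖y'‖ ≤ 1},
    (∫⁻ ω, (‖f ω‖₊ : ℝ≥0∞) ^ p ∂ scalarVar ν y') ^ (1 / p)

/-- Membership in `L^p_w(ν, X, Y)`. -/
def MemLpw [MeasurableSpace Ω] [NormedAddCommGroup X] [NormedAddCommGroup Y]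
    [NormedSpace ℝ Y] (ν : VectorMeasure Ω Y) (p : ℝ) (f : Ω → X) : Prop :=
  StronglyMeasurable f ∧
    ∀ y' : Y →L[ℝ] ℝ, (∫⁻ ω, (‖f ω‖₊ : ℝ≥0∞) ^ p ∂ scalarVar ν y') < ∞

/-- The semivariation of the vector measure `ν`. -/
noncomputable def semivar [MeasurableSpace Ω] [NormedAddCommGroup Y] [NormedSpace ℝ Y]
    (ν : VectorMeasure Ω Y) (E : Set Ω) : ℝ≥0∞ :=
  ⨆ y' ∈ {y' : Y →L[ℝ] ℝ | ‖y'‖ ≤ 1}, scalarVar ν y' E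

/-- The integral `∫_E h ds` of a real function with respect to a signed measure. -/
noncomputable def signedIntegral [MeasurableSpace Ω] (s : SignedMeasure Ω) (E : Set Ω)
    (h : Ω → ℝ) : ℝ :=
  (∫ ω in E, h ω ∂ s.toJordanDecomposition.posPart) -
    (∫ ω in E, h ω ∂ s.toJordanDecomposition.negPart)

/-- The scalar signed measure `y' ∘ ν`. -/
noncomputable def scalarSigned [MeasurableSpace Ω] [NormedAddCommGroup Y] [NormedSpace ℝ Y]
    (ν : VectorMeasure Ω Y) (y' : Y →L[ℝ] ℝ) : SignedMeasure Ω :=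
  VectorMeasure.mapRange ν (y' : Y →ₗ[ℝ] ℝ).toAddMonoidHom y'.continuous

/-- `ν`-integrability in the sense of Lewis. -/
def NuIntegrable [MeasurableSpace Ω] [NormedAddCommGroup Y] [NormedSpace ℝ Y]
    (ν : VectorMeasure Ω Y) (h : Ω → ℝ) : Prop :=
  (∀ y' : Y →L[ℝ] ℝ, Integrable h (scalarVar ν y')) ∧
    ∀ E : Set Ω, MeasurableSet E → ∃ I : Y, ∀ y' : Y →L[ℝ] ℝ,
      y' I = signedIntegral (scalarSigned ν y') E h


section Aux

open Filter

private lemma totalVariation_real_smul_nonneg {Ω : Type*} [MeasurableSpace Ω]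
    (s : SignedMeasure Ω) (c : ℝ) (hc : 0 ≤ c) :
    (c • s).totalVariation = c.toNNReal • s.totalVariation := by
  unfold SignedMeasure.totalVariation
  rw [SignedMeasure.toJordanDecomposition_smul_real,
    JordanDecomposition.real_smul_posPart_nonneg _ _ hc,
    JordanDecomposition.real_smul_negPart_nonneg _ _ hc, smul_add]

private lemma scalarSigned_real_smul {Ω Y : Type*} [MeasurableSpace Ω] [NormedAddCommGroup Y]
    [NormedSpace ℝ Y] (ν : VectorMeasure Ω Y) (c : ℝ) (y' : Y →L[ℝ] ℝ) :
    scalarSigned ν (c • y') = c • scalarSigned ν y' := by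
  apply VectorMeasure.ext
  intro E hE
  simp [scalarSigned, VectorMeasure.mapRange_apply, VectorMeasure.smul_apply]
  exact Or.inl rfl

private lemma scalarVar_real_smul {Ω Y : Type*} [MeasurableSpace Ω] [NormedAddCommGroup Y]
    [NormedSpace ℝ Y] (ν : VectorMeasure Ω Y) (c : ℝ) (hc : 0 ≤ c) (y' : Y →L[ℝ] ℝ) :
    scalarVar ν (c • y') = c.toNNReal • scalarVar ν y' := by
  show (scalarSigned ν (c • y')).totalVariation = _
  rw [scalarSigned_real_smul, totalVariation_real_smul_nonneg _ _ hc]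
  rfl

private lemma scalarVar_zero {Ω Y : Type*} [MeasurableSpace Ω] [NormedAddCommGroup Y]
    [NormedSpace ℝ Y] (ν : VectorMeasure Ω Y) : scalarVar ν 0 = 0 := by
  show (scalarSigned ν 0).totalVariation = 0
  have h : scalarSigned ν (0 : Y →L[ℝ] ℝ) = 0 := by
    apply VectorMeasure.ext
    intro E hE
    simp [scalarSigned, VectorMeasure.mapRange_apply]
  rw [h, SignedMeasure.totalVariation_zero]

end Aux

variable [MeasurableSpace Ω] [NormedAddCommGroup X] [CompleteSpace X]
  [NormedAddCommGroup Y] [NormedSpace ℝ Y] [CompleteSpace Y]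

theorem lpw_complete (ν : VectorMeasure Ω Y) (p : ℝ) (hp : 1 ≤ p)
    (hfin : semivar ν Set.univ < ∞) (F : ℕ → Ω → X) (hF : ∀ n, MemLpw ν p (F n))
    (hcau : ∀ ε : ℝ≥0∞, 0 < ε → ∃ N, ∀ m ≥ N, ∀ n ≥ N,
      lpwNorm ν p (fun ω => F m ω - F n ω) < ε) :
    ∃ f : Ω → X, MemLpw ν p f ∧
      Filter.Tendsto (fun n => lpwNorm ν p (fun ω => F n ω - f ω))
        Filter.atTop (nhds 0) := by
  classical
  have hp0 : (0 : ℝ) < p := lt_of_lt_of_le one_pos hp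
  set q : ℝ≥0∞ := ENNReal.ofReal p with hq
  have hq0 : q ≠ 0 := by simp [hq, ENNReal.ofReal_eq_zero, not_le, hp0]
  have hqt : q ≠ ∞ := ENNReal.ofReal_ne_top
  have hqr : q.toReal = p := ENNReal.toReal_ofReal hp0.le
  have hq1 : (1 : ℝ≥0∞) ≤ q := by
    rw [hq, ← ENNReal.ofReal_one]
    exact ENNReal.ofReal_le_ofReal hp
  have elp : ∀ (g : Ω → X) (μ : Measure Ω),
      eLpNorm g q μ = (∫⁻ ω, (‖g ω‖₊ : ℝ≥0∞) ^ p ∂μ) ^ (1 / p) := by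
    intro g μ
    rw [eLpNorm_eq_lintegral_rpow_enorm_toReal hq0 hqt, hqr]
    rfl
  have lpw_eq : ∀ g : Ω → X, lpwNorm ν p g
      = ⨆ y' ∈ {y' : Y →L[ℝ] ℝ | ‖y'‖ ≤ 1}, eLpNorm g q (scalarVar ν y') := by
    intro g
    unfold lpwNorm
    exact iSup_congr fun y' => iSup_congr fun _ => (elp g _).symm
  have hle : ∀ (g : Ω → X) (y' : Y →L[ℝ] ℝ), ‖y'‖ ≤ 1 →
      eLpNorm g q (scalarVar ν y') ≤ lpwNorm ν p g := by
    intro g y' hy'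
    rw [lpw_eq]
    exact le_iSup₂ (f := fun (y' : Y →L[ℝ] ℝ) (_ : y' ∈ {y' : Y →L[ℝ] ℝ | ‖y'‖ ≤ 1}) =>
      eLpNorm g q (scalarVar ν y')) y' hy'
  -- subsequence
  have hBpos : ∀ k : ℕ, (0 : ℝ≥0∞) < 2⁻¹ ^ k := fun k => ENNReal.pow_pos (by norm_num) k
  choose h' hh' using fun k : ℕ => hcau ((2 : ℝ≥0∞)⁻¹ ^ k) (hBpos k)
  set M : ℕ → ℕ := fun k => (Finset.range (k + 1)).sup h' + k with hM
  have hM_ge : ∀ j k, j ≤ k → h' j ≤ M k := fun j k hjk =>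
    le_trans (Finset.le_sup (Finset.mem_range.mpr (Nat.lt_succ_of_le hjk))) (Nat.le_add_right _ _)
  have hMk : ∀ k, k ≤ M k := fun k => Nat.le_add_left k _
  set G : ℕ → Ω → X := fun k => F (M k) with hG
  have hGmeas : ∀ k, StronglyMeasurable (G k) := fun k => (hF (M k)).1
  have hB : (∑' k : ℕ, (2 : ℝ≥0∞)⁻¹ ^ k) ≠ ∞ := by
    rw [ENNReal.tsum_geometric, ENNReal.one_sub_inv_two, inv_inv]
    exact ENNReal.ofNat_ne_top
  have hGc : ∀ (y' : Y →L[ℝ] ℝ), ‖y'‖ ≤ 1 → ∀ (N n m : ℕ), N ≤ n → N ≤ m →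
      eLpNorm (G n - G m) q (scalarVar ν y') < 2⁻¹ ^ N := by
    intro y' hy' N n m hn hm
    exact lt_of_le_of_lt (hle (fun ω => F (M n) ω - F (M m) ω) y' hy')
      (hh' N (M n) (hM_ge N n hn) (M m) (hM_ge N m hm))
  have hae : ∀ (y' : Y →L[ℝ] ℝ), ‖y'‖ ≤ 1 → ∀ᵐ ω ∂ scalarVar ν y',
      ∃ l : X, Filter.Tendsto (fun k => G k ω) Filter.atTop (nhds l) :=
    fun y' hy' => Lp.ae_tendsto_of_cauchy_eLpNorm (fun k => (hGmeas k).aestronglyMeasurable)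
      hq1 hB (hGc y' hy')
  -- measurable convergence set
  set A : Set Ω := ⋂ (j : ℕ), ⋃ (N : ℕ), ⋂ (m : ℕ), ⋂ (n : ℕ), ⋂ (_ : N ≤ m), ⋂ (_ : N ≤ n),
      {ω | dist (G m ω) (G n ω) ≤ ((j : ℝ) + 1)⁻¹} with hA
  have hAmeas : MeasurableSet A := by
    refine MeasurableSet.iInter fun j => MeasurableSet.iUnion fun N =>
      MeasurableSet.iInter fun m => MeasurableSet.iInter fun n =>
      MeasurableSet.iInter fun _ => MeasurableSet.iInter fun _ => ?_
    exact measurableSet_le ((hGmeas m).dist (hGmeas n)).measurable measurable_const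
  have hAiff : ∀ ω, ω ∈ A ↔ ∃ l : X, Filter.Tendsto (fun k => G k ω) Filter.atTop (nhds l) := by
    intro ω
    simp only [hA, Set.mem_iInter, Set.mem_iUnion, Set.mem_setOf_eq]
    constructor
    · intro h
      apply cauchySeq_tendsto_of_complete
      rw [Metric.cauchySeq_iff]
      intro ε hε
      obtain ⟨j, hj⟩ := exists_nat_one_div_lt hε
      obtain ⟨N, hN⟩ := h j
      exact ⟨N, fun m hm n hn => lt_of_le_of_lt (hN m n hm hn) (by rwa [one_div] at hj)⟩
    · rintro ⟨l, hl⟩ j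
      obtain ⟨N, hN⟩ := Metric.cauchySeq_iff.mp hl.cauchySeq (((j : ℝ) + 1)⁻¹) (by positivity)
      exact ⟨N, fun m n hm hn => (hN m hm n hn).le⟩
  -- the limit function
  set f : Ω → X := fun ω =>
    if h : ∃ l : X, Filter.Tendsto (fun k => G k ω) Filter.atTop (nhds l) then h.choose else 0
    with hf
  have hftend : ∀ ω, ω ∈ A → Filter.Tendsto (fun k => G k ω) Filter.atTop (nhds (f ω)) := by
    intro ω hω
    have h := (hAiff ω).mp hω
    rw [hf]
    simp only [dif_pos h]
    exact h.choose_spec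
  have hHtend : Filter.Tendsto (fun k => A.indicator (G k)) Filter.atTop (nhds f) := by
    rw [tendsto_pi_nhds]
    intro ω
    by_cases hω : ω ∈ A
    · simp only [Set.indicator_of_mem hω]
      exact hftend ω hω
    · simp only [Set.indicator_of_notMem hω]
      have hf0 : f ω = 0 := by
        rw [hf]
        exact dif_neg fun h => hω ((hAiff ω).mpr h)
      rw [hf0]
      exact tendsto_const_nhds
  have hfmeas : StronglyMeasurable f :=
    stronglyMeasurable_of_tendsto _ (fun k => (hGmeas k).indicator hAmeas) hHtend
  have haef : ∀ (y' : Y →L[ℝ] ℝ), ‖y'‖ ≤ 1 → ∀ᵐ ω ∂ scalarVar ν y',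
      Filter.Tendsto (fun k => G k ω) Filter.atTop (nhds (f ω)) :=
    fun y' hy' => (hae y' hy').mono fun ω hω => hftend ω ((hAiff ω).mpr hω)
  -- key estimate
  have key : ∀ ε : ℝ≥0∞, 0 < ε → ∃ N, ∀ n ≥ N, ∀ y' : Y →L[ℝ] ℝ, ‖y'‖ ≤ 1 →
      eLpNorm (fun ω => F n ω - f ω) q (scalarVar ν y') ≤ ε := by
    intro ε hε
    obtain ⟨N, hN⟩ := hcau ε hε
    refine ⟨N, fun n hn y' hy' => ?_⟩
    have hlim : ∀ᵐ ω ∂ scalarVar ν y',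
        Filter.Tendsto (fun k => F n ω - G k ω) Filter.atTop (nhds (F n ω - f ω)) :=
      (haef y' hy').mono fun ω hω => Filter.Tendsto.const_sub _ hω
    have h1 : eLpNorm (fun ω => F n ω - f ω) q (scalarVar ν y')
        ≤ Filter.atTop.liminf fun k =>
          eLpNorm (fun ω => F n ω - G k ω) q (scalarVar ν y') :=
      Lp.eLpNorm_lim_le_liminf_eLpNorm
        (fun k => ((hF n).1.sub (hGmeas k)).aestronglyMeasurable) _ hlim
    have hev : ∀ᶠ k in Filter.atTop,
        eLpNorm (fun ω => F n ω - G k ω) q (scalarVar ν y') ≤ ε := by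
      filter_upwards [Filter.eventually_ge_atTop N] with k hk
      exact le_trans (hle _ y' hy') (hN n hn (M k) (le_trans hk (hMk k))).le
    exact h1.trans ((Filter.liminf_le_limsup (by isBoundedDefault) (by isBoundedDefault)).trans
      (Filter.limsup_le_of_le (by isBoundedDefault) hev))
  -- convergence in lpwNorm
  have lpw_bound : ∀ ε : ℝ≥0∞, 0 < ε → ∃ N, ∀ n ≥ N,
      lpwNorm ν p (fun ω => F n ω - f ω) ≤ ε := by
    intro ε hε
    obtain ⟨N, hN⟩ := key ε hε
    refine ⟨N, fun n hn => ?_⟩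
    rw [lpw_eq]
    exact iSup₂_le fun y' hy' => hN n hn y' hy'
  have htendsto : Filter.Tendsto (fun n => lpwNorm ν p (fun ω => F n ω - f ω))
      Filter.atTop (nhds 0) := ENNReal.tendsto_atTop_zero.mpr lpw_bound
  -- membership
  have hfin1 : ∀ (y' : Y →L[ℝ] ℝ), ‖y'‖ ≤ 1 → eLpNorm f q (scalarVar ν y') < ∞ := by
    intro y' hy'
    obtain ⟨N, hN⟩ := key 1 one_pos
    have heq : eLpNorm f q (scalarVar ν y')
        = eLpNorm ((fun ω => f ω - F N ω) + F N) q (scalarVar ν y') := by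
      congr 1
      ext ω
      simp
    have h1 : eLpNorm f q (scalarVar ν y')
        ≤ eLpNorm (fun ω => f ω - F N ω) q (scalarVar ν y')
          + eLpNorm (F N) q (scalarVar ν y') := by
      rw [heq]
      exact eLpNorm_add_le ((hfmeas.sub (hF N).1).aestronglyMeasurable)
        (hF N).1.aestronglyMeasurable hq1
    have h2 : eLpNorm (fun ω => f ω - F N ω) q (scalarVar ν y') ≤ 1 := by
      rw [show (fun ω => f ω - F N ω) = f - F N from rfl, eLpNorm_sub_comm]
      exact hN N le_rfl y' hy'
    have h3 : eLpNorm (F N) q (scalarVar ν y') < ∞ := by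
      rw [elp]
      exact ENNReal.rpow_lt_top_of_nonneg (by positivity) ((hF N).2 y').ne
    exact lt_of_le_of_lt (h1.trans (add_le_add_left h2 _))
      (ENNReal.add_lt_top.mpr ⟨ENNReal.one_lt_top, h3⟩)
  have hmem2 : ∀ y' : Y →L[ℝ] ℝ, (∫⁻ ω, (‖f ω‖₊ : ℝ≥0∞) ^ p ∂ scalarVar ν y') < ∞ := by
    intro y'
    rcases eq_or_ne y' 0 with rfl | hy0
    · rw [scalarVar_zero]
      simp
    · have hnorm : (0 : ℝ) < ‖y'‖ := norm_pos_iff.mpr hy0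
      have hu : ‖(‖y'‖⁻¹ • y' : Y →L[ℝ] ℝ)‖ ≤ 1 := by
        have : ‖(‖y'‖⁻¹ • y' : Y →L[ℝ] ℝ)‖ = ‖y'‖⁻¹ * ‖y'‖ := by
          have h := norm_smul (‖y'‖⁻¹) y'
          simpa using h
        rw [this, inv_mul_cancel₀ hnorm.ne']
      have hint : (∫⁻ ω, (‖f ω‖₊ : ℝ≥0∞) ^ p ∂ scalarVar ν (‖y'‖⁻¹ • y')) < ∞ := by
        have h := hfin1 _ hu
        rw [elp] at h
        exact (ENNReal.rpow_lt_top_iff_of_pos (by positivity)).mp h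
      have hy'eq : scalarVar ν y' = ‖y'‖.toNNReal • scalarVar ν (‖y'‖⁻¹ • y') := by
        conv_lhs => rw [← smul_inv_smul₀ hnorm.ne' y']
        exact scalarVar_real_smul ν ‖y'‖ (norm_nonneg _) _
      rw [hy'eq]
      have hsmul : (‖y'‖.toNNReal • scalarVar ν (‖y'‖⁻¹ • y'))
          = ((‖y'‖.toNNReal : ℝ≥0∞) • scalarVar ν (‖y'‖⁻¹ • y')) := rfl
      rw [hsmul, lintegral_smul_measure]
      exact ENNReal.mul_lt_top ENNReal.coe_lt_top hint
  exact ⟨f, ⟨hfmeas, hmem2⟩, htendsto⟩
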